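/- Let kp, γp > 0, let (μ*, σ*²) satisfy 0 < μ* < σ*² < (1 + kp/γp)·μ*, set δ = μ* − σ*², and let k1, …, k8 ∈ ℝ. Then the 7×7 matrix A*ℓ with rows r1 = (γp + kp·μ*/δ, −k1 + γp·k5·μ*/kp, 0, 0, −k3 + γp·k7·μ*/kp, k2 − γp·k6·μ*/kp, k4 − γp·k8·μ*/kp), r2 = (kp, −γp, 0, 0, 0, 0, 0), r3 = (−γp − kp·μ*/δ, −k1 + γp·k5·μ*/kp, 2γp + 2kp·μ*/δ, 0, −k3 + γp·k7·μ*/kp, k2 − γp·k6·μ*/kp, k4 − γp·k8·μ*/kp), r4 = (0, −k5·γp·δ/kp, kp, kp·μ*/δ, −γp·k7·δ/kp, γp·k6·δ/kp, γp·k8·δ/kp), r5 = (kp, γp, 0, 2kp, −2γp, 0, 0), r6 = (0, −1, 0, 0, 0, 0, 0), r7 = (0, 0, 0, 0, −1, 0, 0) has determinant det(A*ℓ) = 4·γp·kp·(k2·k8 − k4·k6)·(μ*(kp + γp) − γp·σ*²). Consequently A*ℓ is nonsingular if and only if k2·k8 − k4·k6 ≠ 0. -/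
import Mathlib

set_option maxHeartbeats 1000000
set_option maxRecDepth 4000


/-- Jacobian matrix of the closed-loop mean-and-variance control system for the
gene expression network, evaluated at the equilibrium corresponding to the
reference pair `(μ, σ2)`, with `δ = μ - σ2`. -/
noncomputable def Aell (kp γp μ σ2 k1 k2 k3 k4 k5 k6 k7 k8 : ℝ) : Matrix (Fin 7) (Fin 7) ℝ :=
  !![γp + kp * μ / (μ - σ2), -k1 + γp * k5 * μ / kp, 0, 0,
       -k3 + γp * k7 * μ / kp, k2 - γp * k6 * μ / kp, k4 - γp * k8 * μ / kp;
     kp, -γp, 0, 0, 0, 0, 0;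
     -γp - kp * μ / (μ - σ2), -k1 + γp * k5 * μ / kp, 2 * γp + 2 * (kp * μ / (μ - σ2)), 0,
       -k3 + γp * k7 * μ / kp, k2 - γp * k6 * μ / kp, k4 - γp * k8 * μ / kp;
     0, -k5 * (γp * (μ - σ2) / kp), kp, kp * μ / (μ - σ2),
       -γp * k7 * (μ - σ2) / kp, γp * k6 * (μ - σ2) / kp, γp * k8 * (μ - σ2) / kp;
     kp, γp, 0, 2 * kp, -2 * γp, 0, 0;
     0, -1, 0, 0, 0, 0, 0;
     0, 0, 0, 0, -1, 0, 0]

private theorem det5' (a1 a6 a7 b1 c1 c3 c6 c7 d3 d4 d6 d7 e1 e4 : ℝ) :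
    (!![a1,0,0,a6,a7; b1,0,0,0,0; c1,c3,0,c6,c7; 0,d3,d4,d6,d7; e1,0,e4,0,0] :
      Matrix (Fin 5) (Fin 5) ℝ).det =
      b1*e4*(a7*(c6*d3 - c3*d6) - a6*(c7*d3 - c3*d7)) := by
  simp only [Matrix.det_succ_row_zero, Fin.sum_univ_succ, Fin.sum_univ_zero,
    Matrix.submatrix_apply, Matrix.cons_val', Matrix.cons_val_zero, Matrix.cons_val_one,
    Matrix.head_cons, Matrix.head_fin_const, Matrix.cons_val_succ, Fin.succ_zero_eq_one,
    Fin.succAbove, Matrix.empty_val', Matrix.cons_val_fin_one, Matrix.det_fin_zero]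
  norm_num [Fin.lt_def, Fin.succ]
  ring

private theorem det6' (a1 a2 a6 a7 b1 b2 c1 c2 c3 c6 c7 d2 d3 d4 d6 d7 e1 e2 e4 : ℝ) :
    (!![a1,a2,0,0,a6,a7; b1,b2,0,0,0,0; c1,c2,c3,0,c6,c7;
        0,d2,d3,d4,d6,d7; e1,e2,0,e4,0,0; 0,-1,0,0,0,0] :
      Matrix (Fin 6) (Fin 6) ℝ).det =
      -(b1*e4*(a7*(c6*d3 - c3*d6) - a6*(c7*d3 - c3*d7))) := by
  rw [Matrix.det_succ_row _ 5, Fin.sum_univ_six]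
  have h : (!![a1,a2,0,0,a6,a7; b1,b2,0,0,0,0; c1,c2,c3,0,c6,c7;
        0,d2,d3,d4,d6,d7; e1,e2,0,e4,0,0; 0,-1,0,0,0,0] :
      Matrix (Fin 6) (Fin 6) ℝ).submatrix (Fin.succAbove 5) (Fin.succAbove 1) =
      !![a1,0,0,a6,a7; b1,0,0,0,0; c1,c3,0,c6,c7; 0,d3,d4,d6,d7; e1,0,e4,0,0] := by
    ext i j; fin_cases i <;> fin_cases j <;> rfl
  have e0 : (!![a1,a2,0,0,a6,a7; b1,b2,0,0,0,0; c1,c2,c3,0,c6,c7;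
        0,d2,d3,d4,d6,d7; e1,e2,0,e4,0,0; 0,-1,0,0,0,0] :
      Matrix (Fin 6) (Fin 6) ℝ) 5 0 = 0 := rfl
  have e1' : (!![a1,a2,0,0,a6,a7; b1,b2,0,0,0,0; c1,c2,c3,0,c6,c7;
        0,d2,d3,d4,d6,d7; e1,e2,0,e4,0,0; 0,-1,0,0,0,0] :
      Matrix (Fin 6) (Fin 6) ℝ) 5 1 = -1 := rfl
  have e2' : (!![a1,a2,0,0,a6,a7; b1,b2,0,0,0,0; c1,c2,c3,0,c6,c7;
        0,d2,d3,d4,d6,d7; e1,e2,0,e4,0,0; 0,-1,0,0,0,0] :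
      Matrix (Fin 6) (Fin 6) ℝ) 5 2 = 0 := rfl
  have e3 : (!![a1,a2,0,0,a6,a7; b1,b2,0,0,0,0; c1,c2,c3,0,c6,c7;
        0,d2,d3,d4,d6,d7; e1,e2,0,e4,0,0; 0,-1,0,0,0,0] :
      Matrix (Fin 6) (Fin 6) ℝ) 5 3 = 0 := rfl
  have e4' : (!![a1,a2,0,0,a6,a7; b1,b2,0,0,0,0; c1,c2,c3,0,c6,c7;
        0,d2,d3,d4,d6,d7; e1,e2,0,e4,0,0; 0,-1,0,0,0,0] :
      Matrix (Fin 6) (Fin 6) ℝ) 5 4 = 0 := rfl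
  have e5' : (!![a1,a2,0,0,a6,a7; b1,b2,0,0,0,0; c1,c2,c3,0,c6,c7;
        0,d2,d3,d4,d6,d7; e1,e2,0,e4,0,0; 0,-1,0,0,0,0] :
      Matrix (Fin 6) (Fin 6) ℝ) 5 5 = 0 := rfl
  rw [e0, e1', e2', e3, e4', e5', h, det5',
    show ((5 : Fin 6) : ℕ) = 5 from rfl, show ((1 : Fin 6) : ℕ) = 1 from rfl]
  norm_num

private theorem det7' (a1 a2 a5 a6 a7 b1 b2 c1 c2 c3 c5 c6 c7 d2 d3 d4 d5 d6 d7 e1 e2 e4 e5 : ℝ) :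
    (!![a1,a2,0,0,a5,a6,a7; b1,b2,0,0,0,0,0; c1,c2,c3,0,c5,c6,c7;
       0,d2,d3,d4,d5,d6,d7; e1,e2,0,e4,e5,0,0; 0,-1,0,0,0,0,0;
       0,0,0,0,-1,0,0] : Matrix (Fin 7) (Fin 7) ℝ).det =
      b1*e4*(a7*(c6*d3 - c3*d6) - a6*(c7*d3 - c3*d7)) := by
  rw [Matrix.det_succ_row _ 6, Fin.sum_univ_seven]
  have h : (!![a1,a2,0,0,a5,a6,a7; b1,b2,0,0,0,0,0; c1,c2,c3,0,c5,c6,c7;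
       0,d2,d3,d4,d5,d6,d7; e1,e2,0,e4,e5,0,0; 0,-1,0,0,0,0,0;
       0,0,0,0,-1,0,0] : Matrix (Fin 7) (Fin 7) ℝ).submatrix
      (Fin.succAbove 6) (Fin.succAbove 4) =
      !![a1,a2,0,0,a6,a7; b1,b2,0,0,0,0; c1,c2,c3,0,c6,c7;
         0,d2,d3,d4,d6,d7; e1,e2,0,e4,0,0; 0,-1,0,0,0,0] := by
    ext i j; fin_cases i <;> fin_cases j <;> rfl
  have f0 : (!![a1,a2,0,0,a5,a6,a7; b1,b2,0,0,0,0,0; c1,c2,c3,0,c5,c6,c7;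
       0,d2,d3,d4,d5,d6,d7; e1,e2,0,e4,e5,0,0; 0,-1,0,0,0,0,0;
       0,0,0,0,-1,0,0] : Matrix (Fin 7) (Fin 7) ℝ) 6 0 = 0 := rfl
  have f1 : (!![a1,a2,0,0,a5,a6,a7; b1,b2,0,0,0,0,0; c1,c2,c3,0,c5,c6,c7;
       0,d2,d3,d4,d5,d6,d7; e1,e2,0,e4,e5,0,0; 0,-1,0,0,0,0,0;
       0,0,0,0,-1,0,0] : Matrix (Fin 7) (Fin 7) ℝ) 6 1 = 0 := rfl
  have f2 : (!![a1,a2,0,0,a5,a6,a7; b1,b2,0,0,0,0,0; c1,c2,c3,0,c5,c6,c7;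
       0,d2,d3,d4,d5,d6,d7; e1,e2,0,e4,e5,0,0; 0,-1,0,0,0,0,0;
       0,0,0,0,-1,0,0] : Matrix (Fin 7) (Fin 7) ℝ) 6 2 = 0 := rfl
  have f3 : (!![a1,a2,0,0,a5,a6,a7; b1,b2,0,0,0,0,0; c1,c2,c3,0,c5,c6,c7;
       0,d2,d3,d4,d5,d6,d7; e1,e2,0,e4,e5,0,0; 0,-1,0,0,0,0,0;
       0,0,0,0,-1,0,0] : Matrix (Fin 7) (Fin 7) ℝ) 6 3 = 0 := rfl
  have f4 : (!![a1,a2,0,0,a5,a6,a7; b1,b2,0,0,0,0,0; c1,c2,c3,0,c5,c6,c7;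
       0,d2,d3,d4,d5,d6,d7; e1,e2,0,e4,e5,0,0; 0,-1,0,0,0,0,0;
       0,0,0,0,-1,0,0] : Matrix (Fin 7) (Fin 7) ℝ) 6 4 = -1 := rfl
  have f5 : (!![a1,a2,0,0,a5,a6,a7; b1,b2,0,0,0,0,0; c1,c2,c3,0,c5,c6,c7;
       0,d2,d3,d4,d5,d6,d7; e1,e2,0,e4,e5,0,0; 0,-1,0,0,0,0,0;
       0,0,0,0,-1,0,0] : Matrix (Fin 7) (Fin 7) ℝ) 6 5 = 0 := rfl
  have f6 : (!![a1,a2,0,0,a5,a6,a7; b1,b2,0,0,0,0,0; c1,c2,c3,0,c5,c6,c7;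
       0,d2,d3,d4,d5,d6,d7; e1,e2,0,e4,e5,0,0; 0,-1,0,0,0,0,0;
       0,0,0,0,-1,0,0] : Matrix (Fin 7) (Fin 7) ℝ) 6 6 = 0 := rfl
  rw [f0, f1, f2, f3, f4, f5, f6, h, det6',
    show ((6 : Fin 7) : ℕ) = 6 from rfl, show ((4 : Fin 7) : ℕ) = 4 from rfl]
  norm_num

theorem stmt11 (kp γp μ σ2 k1 k2 k3 k4 k5 k6 k7 k8 : ℝ)
    (hkp : 0 < kp) (hγp : 0 < γp) (hμ : 0 < μ)
    (h1 : μ < σ2) (h2 : σ2 < (1 + kp / γp) * μ) :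
    (Aell kp γp μ σ2 k1 k2 k3 k4 k5 k6 k7 k8).det =
      4 * γp * kp * (k2 * k8 - k4 * k6) * (μ * (kp + γp) - γp * σ2) ∧
    ((Aell kp γp μ σ2 k1 k2 k3 k4 k5 k6 k7 k8).det ≠ 0 ↔ k2 * k8 - k4 * k6 ≠ 0) := by
  have hδ : μ - σ2 ≠ 0 := by intro h; linarith
  have hkp' : kp ≠ 0 := ne_of_gt hkp
  have hfac : 0 < μ * (kp + γp) - γp * σ2 := by
    have h2' : γp * σ2 < γp * ((1 + kp / γp) * μ) := (mul_lt_mul_iff_right₀ hγp).mpr h2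
    have heq : γp * ((1 + kp / γp) * μ) = μ * (kp + γp) - kp * μ + kp * μ := by
      field_simp; ring
    nlinarith
  have hdet : (Aell kp γp μ σ2 k1 k2 k3 k4 k5 k6 k7 k8).det =
      4 * γp * kp * (k2 * k8 - k4 * k6) * (μ * (kp + γp) - γp * σ2) := by
    rw [Aell, det7']
    field_simp
    ring
  refine ⟨hdet, ?_⟩
  rw [hdet]
  have h4 : (4 : ℝ) * γp * kp * (μ * (kp + γp) - γp * σ2) ≠ 0 := by positivity
  constructor
  · intro h hk; exact h (by rw [hk]; ring)
  · intro hk h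
    apply hk
    have : 4 * γp * kp * (μ * (kp + γp) - γp * σ2) * (k2 * k8 - k4 * k6) = 0 := by
      rw [← h]; ring
    exact (mul_eq_zero.mp this).resolve_left h4
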